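/- Fix the construction of G_g and T_g^α described in the context, with positive integers n, m, g satisfying g ≥ 2 and g ∣ 2n. If there exist d ≥ 1 indices i_1 < i_2 < … < i_d in {1,…,m} with S_{i_1} ∪ ⋯ ∪ S_{i_d} = N, then there exists a partition α of n with at most d parts such that T_g^α is isomorphic to a subgraph of G_g, i.e., there is an injective map from the vertices of T_g^α to the vertices of G_g carrying every edge of T_g^α to an edge of G_g. -/

import Mathlib

/-!
Construction of the host graph `G_g` and the pattern tree `T_g^α` from the reduction
of Set Cover to kTree.

Host graph `G_g` (for a Set Cover instance with ground set `N = Fin n` and sets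
`S : Fin m → Finset (Fin n)`, with `q = 2n/g`): vertices are
`N ⊔ M ⊔ M_g ⊔ R ⊔ {r_g, r_1, r_2, r}` where `M_g` is the collection of `g`-element
subsets of `M` and `R = {v^i_j : i ∈ {1,2,3,4}, 1 ≤ j ≤ q}`.
Encoding of the four special roots in `HostV.root : Fin 4`:
`root 0 = r_g`, `root 1 = r_1`, `root 2 = r_2`, `root 3 = r`; and in
`HostV.rv i j`: `i = 0,1,2,3` encodes `v^1_j, v^2_j, v^3_j, v^4_j` respectively.
-/
inductive HostV (n m g q : ℕ) where
  | elem : Fin n → HostV n m g q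
  | mset : Fin m → HostV n m g q
  | gset : {X : Finset (Fin m) // X.card = g} → HostV n m g q
  | rv : Fin 4 → Fin q → HostV n m g q
  | root : Fin 4 → HostV n m g q

/-- The edges of the host graph `G_g` (each undirected edge listed in one orientation). -/
def hostRel (n m g q : ℕ) (S : Fin m → Finset (Fin n)) :
    HostV n m g q → HostV n m g q → Prop := fun u v =>
  -- {e, i} for e ∈ N, i ∈ M with e ∈ S_i
  (∃ e i, u = HostV.elem e ∧ v = HostV.mset i ∧ e ∈ S i) ∨
  -- {e, X} for e ∈ N, X ∈ M_g with e ∈ ⋃_{i ∈ X} S_i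
  (∃ e X, u = HostV.elem e ∧ v = HostV.gset X ∧ ∃ i ∈ X.1, e ∈ S i) ∨
  -- {r_g, X} for every X ∈ M_g
  (∃ X, u = HostV.root 0 ∧ v = HostV.gset X) ∨
  -- {r_g, v^4_j} for every j
  (∃ j, u = HostV.root 0 ∧ v = HostV.rv 3 j) ∨
  -- {r_1, v^1_j} for every j
  (∃ j, u = HostV.root 1 ∧ v = HostV.rv 0 j) ∨
  -- {r_2, v^2_j} for every j
  (∃ j, u = HostV.root 2 ∧ v = HostV.rv 1 j) ∨
  -- {r, r_g}, {r, r_1}, {r, r_2}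
  (u = HostV.root 3 ∧ (v = HostV.root 0 ∨ v = HostV.root 1 ∨ v = HostV.root 2)) ∨
  -- {r, i} for every i ∈ M
  (∃ i, u = HostV.root 3 ∧ v = HostV.mset i) ∨
  -- {r, v^3_j} for every j
  (∃ j, u = HostV.root 3 ∧ v = HostV.rv 2 j)

/-- Number of leaves of the `k`-th big star center:
`P_k = p_{(k−1)g+1} + ⋯ + p_{kg}` (0-indexed: indices `k·g, …, k·g+g−1`;
the index is always in range, the `dite` only discharges the bound proof). -/
def bigCnt (l g : ℕ) (p : Fin l → ℕ) (k : Fin (l / g)) : ℕ :=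
  ∑ j : Fin g, if h : (k : ℕ) * g + (j : ℕ) < l then p ⟨(k : ℕ) * g + (j : ℕ), h⟩ else 0

/-- Number of leaves of the `k`-th small star center: `p_{g·⌊l/g⌋ + k}`. -/
def smallCnt (l g : ℕ) (p : Fin l → ℕ) (k : Fin (l % g)) : ℕ :=
  if h : g * (l / g) + (k : ℕ) < l then p ⟨g * (l / g) + (k : ℕ), h⟩ else 0

/-- Star centers of the pattern tree: `⌊l/g⌋` big ones and `g' = l mod g` small ones. -/
abbrev PatC (l g : ℕ) := Fin (l / g) ⊕ Fin (l % g)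

/-- Leaf counts of the star centers. -/
abbrev patCnt (l g : ℕ) (p : Fin l → ℕ) : PatC l g → ℕ :=
  Sum.elim (bigCnt l g p) (smallCnt l g p)

/-!
Pattern tree `T_g^α` for a partition `α = (p_1, …, p_l)` of `n`: vertices are
`{r'_g, r'_1, r'_2, r'} ⊔ R' ⊔ centers ⊔ leaves`.
Encoding in `PatV.root : Fin 4`: `root 0 = r'_g`, `root 1 = r'_1`, `root 2 = r'_2`,
`root 3 = r'`; and `PatV.rv i j` with `i = 0,1,2,3` encodes `v'^1_j, v'^2_j, v'^3_j, v'^4_j`.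
-/
inductive PatV (q : ℕ) (C : Type) (cnt : C → ℕ) where
  | root : Fin 4 → PatV q C cnt
  | rv : Fin 4 → Fin q → PatV q C cnt
  | center : C → PatV q C cnt
  | leaf : (c : C) → Fin (cnt c) → PatV q C cnt

/-- Vertices of the pattern tree `T_g^α`. -/
abbrev PatVert (q l g : ℕ) (p : Fin l → ℕ) := PatV q (PatC l g) (patCnt l g p)

/-- The edges of the pattern tree `T_g^α` (each undirected edge listed once). -/
def patRel (q l g : ℕ) (p : Fin l → ℕ) :
    PatVert q l g p → PatVert q l g p → Prop := fun u v =>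
  -- {r', r'_g}, {r', r'_1}, {r', r'_2}
  (u = PatV.root 3 ∧ (v = PatV.root 0 ∨ v = PatV.root 1 ∨ v = PatV.root 2)) ∨
  -- {r', v'^3_j} for all j
  (∃ j, u = PatV.root 3 ∧ v = PatV.rv 2 j) ∨
  -- {r'_g, v'^4_j} for all j
  (∃ j, u = PatV.root 0 ∧ v = PatV.rv 3 j) ∨
  -- {r'_1, v'^1_j} for all j
  (∃ j, u = PatV.root 1 ∧ v = PatV.rv 0 j) ∨
  -- {r'_2, v'^2_j} for all j
  (∃ j, u = PatV.root 2 ∧ v = PatV.rv 1 j) ∨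
  -- {r'_g, c_k} for the big star centers
  (∃ k, u = PatV.root 0 ∧ v = PatV.center (Sum.inl k)) ∨
  -- {r', c'_k} for the small star centers
  (∃ k, u = PatV.root 3 ∧ v = PatV.center (Sum.inr k)) ∨
  -- each star center joined to each of its own leaves
  (∃ c i, u = PatV.center c ∧ v = PatV.leaf c i)

/-- `EA`-graph is isomorphic to a subgraph of the `EB`-graph: an injective map on
vertices carrying every (undirected) edge to an (undirected) edge. -/
def IsSubgraphIso {A B : Type*} (EA : A → A → Prop) (EB : B → B → Prop) : Prop :=
  ∃ φ : A → B, Function.Injective φ ∧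
    ∀ u v, EA u v → (EB (φ u) (φ v) ∨ EB (φ v) (φ u))

/-!
STATEMENT 6 (completeness of the reduction).
With `g ≥ 2` and `g ∣ 2n` (so `q = 2n/g`): if some `d ≥ 1` distinct sets of the Set
Cover instance cover `N`, then there is a partition `α = (p_1, …, p_l)` of `n` with at
most `d` parts such that `T_g^α` is isomorphic to a subgraph of `G_g`.
-/
theorem setcover_to_ktree_completeness (n m g : ℕ)
    (hn : 0 < n) (hm : 0 < m) (hg : 2 ≤ g) (hdvd : g ∣ 2 * n)
    (S : Fin m → Finset (Fin n))
    (d : ℕ) (hd : 1 ≤ d) (I : Finset (Fin m)) (hI : I.card = d)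
    (hcov : ∀ e : Fin n, ∃ i ∈ I, e ∈ S i) :
    ∃ (l : ℕ) (p : Fin l → ℕ),
      (∀ k, 0 < p k) ∧ (∑ k, p k = n) ∧ l ≤ d ∧
      IsSubgraphIso (patRel (2 * n / g) l g p) (hostRel n m g (2 * n / g) S) := by
  classical
  have hg0 : 0 < g := by omega
  choose f hfI hfS using hcov
  set J : Finset (Fin m) := Finset.univ.image f with hJdef
  set l : ℕ := J.card with hldef
  let σ0 := J.orderIsoOfFin hldef.symm
  let σ : Fin l → Fin m := fun t => (σ0 t : Fin m)
  have hσinj : Function.Injective σ := fun a b h => σ0.injective (Subtype.ext h)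
  have hσmem : ∀ t, σ t ∈ J := fun t => (σ0 t).2
  have hσsurj : ∀ j ∈ J, ∃ t, σ t = j := fun j hj =>
    ⟨σ0.symm ⟨j, hj⟩, congrArg Subtype.val (σ0.apply_symm_apply _)⟩
  let Fib : Fin l → Finset (Fin n) := fun t => Finset.univ.filter fun e => f e = σ t
  have hFib : ∀ t e, e ∈ Fib t ↔ f e = σ t := by intro t e; simp [Fib]
  let p : Fin l → ℕ := fun t => (Fib t).card
  have hppos : ∀ t, 0 < p t := by
    intro t
    obtain ⟨e, -, he⟩ := Finset.mem_image.mp (hσmem t)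
    exact Finset.card_pos.mpr ⟨e, (hFib t e).mpr he⟩
  have hsum : ∑ t, p t = n := by
    have h1 : (Finset.univ : Finset (Fin n)).card
        = ∑ j ∈ J, (Finset.univ.filter fun e => f e = j).card :=
      Finset.card_eq_sum_card_fiberwise
        (fun e _ => Finset.mem_image_of_mem f (Finset.mem_univ e))
    have h2 : ∑ t, p t = ∑ j ∈ J, (Finset.univ.filter fun e => f e = j).card := by
      refine Finset.sum_bij (fun t _ => σ t) (fun t _ => hσmem t)
        (fun a _ b _ h => hσinj h)
        (fun j hj => by obtain ⟨t, ht⟩ := hσsurj j hj; exact ⟨t, Finset.mem_univ t, ht⟩)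
        (fun t _ => rfl)
    rw [h2, ← h1, Finset.card_univ, Fintype.card_fin]
  have hJI : J ⊆ I := by
    intro j hj; obtain ⟨e, -, rfl⟩ := Finset.mem_image.mp hj; exact hfI e
  have hld : l ≤ d := by rw [hldef, ← hI]; exact Finset.card_le_card hJI
  have hbig : ∀ (k : Fin (l / g)) (j : Fin g), (k : ℕ) * g + (j : ℕ) < l := by
    intro k j
    have h1 : (k : ℕ) + 1 ≤ l / g := k.2
    calc (k : ℕ) * g + (j : ℕ) < ((k : ℕ) + 1) * g := by
          rw [add_mul, one_mul]; exact Nat.add_lt_add_left j.2 _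
      _ ≤ (l / g) * g := Nat.mul_le_mul_right _ h1
      _ ≤ l := Nat.div_mul_le_self l g
  have hsmall : ∀ k : Fin (l % g), g * (l / g) + (k : ℕ) < l := by
    intro k
    have h1 := Nat.div_add_mod l g
    have h2 := k.2
    omega
  have fibDisj : ∀ t t', t ≠ t' → Disjoint (Fib t) (Fib t') := by
    intro t t' htt
    rw [Finset.disjoint_left]
    intro e he he'
    exact htt (hσinj (((hFib t e).mp he).symm.trans ((hFib t' e).mp he')))
  let idxSet : PatC l g → Finset (Fin l) :=
    Sum.elim
      (fun k => Finset.univ.image fun j : Fin g => (⟨(k : ℕ) * g + (j : ℕ), hbig k j⟩ : Fin l))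
      (fun k => {(⟨g * (l / g) + (k : ℕ), hsmall k⟩ : Fin l)})
  have memBig : ∀ (k : Fin (l / g)) (t : Fin l), t ∈ idxSet (Sum.inl k) →
      (t : ℕ) / g = (k : ℕ) ∧ (t : ℕ) < g * (l / g) := by
    intro k t ht
    simp only [idxSet, Sum.elim_inl, Finset.mem_image, Finset.mem_univ, true_and] at ht
    obtain ⟨j, rfl⟩ := ht
    constructor
    · show ((k : ℕ) * g + (j : ℕ)) / g = (k : ℕ)
      rw [mul_comm, Nat.mul_add_div hg0, Nat.div_eq_of_lt j.2, add_zero]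
    · have h1 : (k : ℕ) + 1 ≤ l / g := k.2
      show (k : ℕ) * g + (j : ℕ) < g * (l / g)
      calc (k : ℕ) * g + (j : ℕ) < ((k : ℕ) + 1) * g := by
            rw [add_mul, one_mul]; exact Nat.add_lt_add_left j.2 _
        _ ≤ (l / g) * g := Nat.mul_le_mul_right _ h1
        _ = g * (l / g) := mul_comm _ _
  have memSmall : ∀ (k : Fin (l % g)) (t : Fin l), t ∈ idxSet (Sum.inr k) →
      (t : ℕ) = g * (l / g) + (k : ℕ) := by
    intro k t ht
    simp only [idxSet, Sum.elim_inr, Finset.mem_singleton] at ht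
    subst ht; rfl
  have idxDisj : ∀ c c', c ≠ c' → Disjoint (idxSet c) (idxSet c') := by
    rintro (k | k) (k' | k') hne <;> rw [Finset.disjoint_left] <;> intro t ht ht'
    · obtain ⟨h1, -⟩ := memBig k t ht
      obtain ⟨h2, -⟩ := memBig k' t ht'
      exact hne (congrArg Sum.inl (Fin.ext (h1.symm.trans h2)))
    · obtain ⟨-, h1⟩ := memBig k t ht
      have h2 := memSmall k' t ht'
      omega
    · have h1 := memSmall k t ht
      obtain ⟨-, h2⟩ := memBig k' t ht'
      omega
    · have h1 := memSmall k t ht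
      have h2 := memSmall k' t ht'
      exact hne (congrArg Sum.inr (Fin.ext (by omega)))
  let FC : PatC l g → Finset (Fin n) := fun c => (idxSet c).biUnion Fib
  have hFCmem : ∀ c e, e ∈ FC c ↔ ∃ t ∈ idxSet c, f e = σ t := by
    intro c e
    simp only [FC, Finset.mem_biUnion]
    exact exists_congr fun t => and_congr_right fun _ => hFib t e
  have hjinj : ∀ k : Fin (l / g),
      Function.Injective (fun j : Fin g => (⟨(k : ℕ) * g + (j : ℕ), hbig k j⟩ : Fin l)) := by
    intro k a b h
    have h2 := congrArg Fin.val h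
    simp only at h2
    exact Fin.ext (by omega)
  have hFCcard : ∀ c, (FC c).card = patCnt l g p c := by
    rintro (k | k)
    · show ((idxSet (Sum.inl k)).biUnion Fib).card = bigCnt l g p k
      rw [Finset.card_biUnion (fun x _ y _ hxy => fibDisj x y hxy)]
      show ∑ t ∈ Finset.univ.image _, (Fib t).card = _
      rw [Finset.sum_image (fun a _ b _ h => hjinj k h)]
      unfold bigCnt
      refine Finset.sum_congr rfl fun j _ => ?_
      rw [dif_pos (hbig k j)]
    · show ((idxSet (Sum.inr k)).biUnion Fib).card = smallCnt l g p k
      show (({(⟨g * (l / g) + (k : ℕ), hsmall k⟩ : Fin l)} : Finset (Fin l)).biUnion Fib).card = _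
      rw [Finset.singleton_biUnion]
      unfold smallCnt
      rw [dif_pos (hsmall k)]
  have hFCdisj : ∀ c c', c ≠ c' → Disjoint (FC c) (FC c') := by
    intro c c' h
    rw [Finset.disjoint_biUnion_left]
    intro t ht
    rw [Finset.disjoint_biUnion_right]
    intro t' ht'
    refine fibDisj t t' fun hte => ?_
    exact (Finset.disjoint_left.mp (idxDisj c c' h) ht) (hte ▸ ht')
  let X : Fin (l / g) → {Y : Finset (Fin m) // Y.card = g} := fun k =>
    ⟨(idxSet (Sum.inl k)).image σ, by
      rw [Finset.card_image_of_injective _ hσinj]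
      show (Finset.univ.image _).card = g
      rw [Finset.card_image_of_injective _ (hjinj k), Finset.card_univ, Fintype.card_fin]⟩
  have hXinj : Function.Injective X := by
    intro k k' h
    have hval : (idxSet (Sum.inl k)).image σ = (idxSet (Sum.inl k')).image σ :=
      congrArg Subtype.val h
    set t0 : Fin l := ⟨(k : ℕ) * g + ((⟨0, hg0⟩ : Fin g) : ℕ), hbig k ⟨0, hg0⟩⟩ with ht0
    have ht0mem : t0 ∈ idxSet (Sum.inl k) := by
      simp only [idxSet, Sum.elim_inl, Finset.mem_image, Finset.mem_univ, true_and]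
      exact ⟨⟨0, hg0⟩, rfl⟩
    have h1 : σ t0 ∈ (idxSet (Sum.inl k')).image σ := by
      rw [← hval]; exact Finset.mem_image_of_mem σ ht0mem
    obtain ⟨t', ht', hσt'⟩ := Finset.mem_image.mp h1
    have ht0' : t0 ∈ idxSet (Sum.inl k') := (hσinj hσt') ▸ ht'
    obtain ⟨hq1, -⟩ := memBig k t0 ht0mem
    obtain ⟨hq2, -⟩ := memBig k' t0 ht0'
    exact Fin.ext (hq1.symm.trans hq2)
  let centerImg : PatC l g → HostV n m g (2 * n / g) :=
    Sum.elim (fun k => HostV.gset (X k))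
      (fun k => HostV.mset (σ ⟨g * (l / g) + (k : ℕ), hsmall k⟩))
  have hCinj : Function.Injective centerImg := by
    rintro (k | k) (k' | k') h <;>
      simp only [centerImg, Sum.elim_inl, Sum.elim_inr] at h
    · injection h with h; exact congrArg Sum.inl (hXinj h)
    · cases h
    · cases h
    · injection h with h
      have h2 := congrArg Fin.val (hσinj h)
      simp only at h2
      exact congrArg Sum.inr (Fin.ext (by omega))
  let leafElem : (c : PatC l g) → Fin (patCnt l g p c) → Fin n :=
    fun c i => ((FC c).orderIsoOfFin (hFCcard c) i : Fin n)
  have hleafmem : ∀ c i, leafElem c i ∈ FC c :=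
    fun c i => ((FC c).orderIsoOfFin (hFCcard c) i).2
  have hleafinj : ∀ c i c' i', leafElem c i = leafElem c' i' →
      (PatV.leaf c i : PatVert (2 * n / g) l g p) = PatV.leaf c' i' := by
    intro c i c' i' h
    by_cases hcc : c = c'
    · subst hcc
      have : i = i' := (Finset.orderIsoOfFin (FC c) (hFCcard c)).injective (Subtype.ext h)
      rw [this]
    · have h1 : leafElem c i ∈ FC c' := h ▸ hleafmem c' i'
      exact absurd h1 (Finset.disjoint_left.mp (hFCdisj c c' hcc) (hleafmem c i))
  refine ⟨l, p, hppos, hsum, hld, ?_⟩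
  refine ⟨fun v => match v with
    | .root i => .root i
    | .rv i j => .rv i j
    | .center c => centerImg c
    | .leaf c i => .elem (leafElem c i), ?_, ?_⟩
  · intro u v h
    match u, v with
    | .root i, .root i' => injection h with h; rw [h]
    | .root i, .rv i' j' => cases h
    | .root i, .center c' => rcases c' with k' | k' <;> cases h
    | .root i, .leaf c' i' => cases h
    | .rv i j, .root i' => cases h
    | .rv i j, .rv i' j' => injection h with h1 h2; rw [h1, h2]
    | .rv i j, .center c' => rcases c' with k' | k' <;> cases h
    | .rv i j, .leaf c' i' => cases h
    | .center c, .root i' => rcases c with k | k <;> cases h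
    | .center c, .rv i' j' => rcases c with k | k <;> cases h
    | .center c, .center c' => exact congrArg PatV.center (hCinj h)
    | .center c, .leaf c' i' => rcases c with k | k <;> cases h
    | .leaf c i, .root i' => cases h
    | .leaf c i, .rv i' j' => cases h
    | .leaf c i, .center c' => rcases c' with k' | k' <;> cases h
    | .leaf c i, .leaf c' i' =>
      injection h with h
      exact hleafinj c i c' i' h
  · intro u v huv
    rcases huv with ⟨hu, hv⟩ | ⟨j, hu, hv⟩ | ⟨j, hu, hv⟩ | ⟨j, hu, hv⟩ | ⟨j, hu, hv⟩ |
      ⟨k, hu, hv⟩ | ⟨k, hu, hv⟩ | ⟨c, i, hu, hv⟩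
    · subst hu
      rcases hv with rfl | rfl | rfl <;> left <;> unfold hostRel
      · exact Or.inr (Or.inr (Or.inr (Or.inr (Or.inr (Or.inr (Or.inl ⟨rfl, Or.inl rfl⟩))))))
      · exact Or.inr (Or.inr (Or.inr (Or.inr (Or.inr (Or.inr (Or.inl ⟨rfl, Or.inr (Or.inl rfl)⟩))))))
      · exact Or.inr (Or.inr (Or.inr (Or.inr (Or.inr (Or.inr (Or.inl ⟨rfl, Or.inr (Or.inr rfl)⟩))))))
    · subst hu; subst hv; left; unfold hostRel
      exact Or.inr (Or.inr (Or.inr (Or.inr (Or.inr (Or.inr (Or.inr (Or.inr ⟨j, rfl, rfl⟩)))))))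
    · subst hu; subst hv; left; unfold hostRel
      exact Or.inr (Or.inr (Or.inr (Or.inl ⟨j, rfl, rfl⟩)))
    · subst hu; subst hv; left; unfold hostRel
      exact Or.inr (Or.inr (Or.inr (Or.inr (Or.inl ⟨j, rfl, rfl⟩))))
    · subst hu; subst hv; left; unfold hostRel
      exact Or.inr (Or.inr (Or.inr (Or.inr (Or.inr (Or.inl ⟨j, rfl, rfl⟩)))))
    · subst hu; subst hv; left; unfold hostRel
      exact Or.inr (Or.inr (Or.inl ⟨X k, rfl, rfl⟩))
    · subst hu; subst hv; left; unfold hostRel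
      exact Or.inr (Or.inr (Or.inr (Or.inr (Or.inr (Or.inr (Or.inr (Or.inl
        ⟨σ ⟨g * (l / g) + (k : ℕ), hsmall k⟩, rfl, rfl⟩)))))))
    · subst hu; subst hv; right; unfold hostRel
      obtain ⟨t, ht, hft⟩ := (hFCmem c (leafElem c i)).mp (hleafmem c i)
      rcases c with k | k
      · refine Or.inr (Or.inl ⟨leafElem (Sum.inl k) i, X k, rfl, rfl, σ t, ?_, ?_⟩)
        · exact Finset.mem_image_of_mem σ ht
        · exact hft ▸ hfS (leafElem (Sum.inl k) i)
      · have ht' := memSmall k t ht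
        have htt : t = ⟨g * (l / g) + (k : ℕ), hsmall k⟩ := Fin.ext ht'
        refine Or.inl ⟨leafElem (Sum.inr k) i, σ ⟨g * (l / g) + (k : ℕ), hsmall k⟩, rfl, rfl, ?_⟩
        rw [← htt, ← hft]
        exact hfS _
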